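/- Let H be a finite p-group and H* a proper normal subgroup of H. If there exists a nonzero finite-dimensional complex representation M of H such that every element of H fixing some nonzero vector of M lies in H*, then there exist a subgroup C of H and a normal subgroup E of C with C/E cyclic such that every element x ∈ H \ H* has a power x^n lying in C \ E. -/

import Mathlib

universe u v

section sep
variable {H : Type u} [Group H] {M : Type v} [AddCommGroup M] [Module ℂ M]

lemma sep_lemma (ρ : Representation ℂ H M) (T : Set H) (ν : ℕ → H → ℂ) :
    ∀ (ℓ : ℕ) (w : ℕ → M),
      (∀ i, i < ℓ + 1 → ∀ a ∈ T, ρ a (w i) = ν i a • w i) →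
      (∀ j, 0 < j → j < ℓ + 1 → ∃ a ∈ T, ν 0 a ≠ ν j a) →
      (∑ i ∈ Finset.range (ℓ + 1), w i) = 0 → w 0 = 0 := by
  intro ℓ
  induction ℓ with
  | zero => intro w _ _ hsum; simpa using hsum
  | succ ℓ ih =>
    intro w hw hsep hsum
    obtain ⟨a, haT, hane⟩ := hsep (ℓ + 1) (Nat.succ_pos ℓ) (Nat.lt_succ_self _)
    set w' : ℕ → M := fun i => (ν i a - ν (ℓ + 1) a) • w i with hw'def
    have h1 : ∑ i ∈ Finset.range (ℓ + 1 + 1), w' i = 0 := by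
      have he : ∑ i ∈ Finset.range (ℓ + 1 + 1), w' i
          = ρ a (∑ i ∈ Finset.range (ℓ + 1 + 1), w i)
            - ν (ℓ + 1) a • (∑ i ∈ Finset.range (ℓ + 1 + 1), w i) := by
        rw [map_sum, Finset.smul_sum, ← Finset.sum_sub_distrib]
        refine Finset.sum_congr rfl fun i hi => ?_
        show w' i = _
        rw [hw'def]
        simp only []
        rw [sub_smul, hw i (Finset.mem_range.mp hi) a haT]
      rw [he, hsum]; simp
    have hlast : w' (ℓ + 1) = 0 := by simp [hw'def]
    rw [Finset.sum_range_succ, hlast, add_zero] at h1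
    have h0 := ih w'
      (fun i hi b hbT => by
        show (ρ b) ((ν i a - ν (ℓ + 1) a) • w i) = ν i b • (ν i a - ν (ℓ + 1) a) • w i
        rw [map_smul, hw i (Nat.lt_succ_of_lt hi) b hbT, smul_comm])
      (fun j hj hj' => hsep j hj (Nat.lt_succ_of_lt hj')) h1
    have : (ν 0 a - ν (ℓ + 1) a) • w 0 = 0 := h0
    have hne : ν 0 a - ν (ℓ + 1) a ≠ 0 := sub_ne_zero.mpr hane
    exact (smul_eq_zero.mp this).resolve_left hne

end sep

theorem core_lemma {p : ℕ} (hp : p.Prime) :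
    ∀ (d : ℕ) (H : Type u) (_ : Group H) (_ : Finite H) (hpH : IsPGroup p H)
      (M : Type v) (_ : AddCommGroup M) (_ : Module ℂ M) (_ : FiniteDimensional ℂ M)
      (_ : Nontrivial M) (ρ : Representation ℂ H M),
      Module.finrank ℂ M ≤ d →
      ∃ (C : Subgroup H) (χ : C →* ℂˣ), ∀ x : H, (∀ v : M, v ≠ 0 → ρ x v ≠ v) →
        ∃ n : ℕ, 0 < n ∧ ∃ hx : x ^ n ∈ C, χ ⟨x ^ n, hx⟩ ≠ 1 := by
  intro d
  induction d with
  | zero =>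
    intro H _ _ hpH M _ _ _ _ ρ hd
    exact absurd (Nat.le_antisymm hd (Nat.zero_le _)) (Module.finrank_pos (R := ℂ) (M := M)).ne'
  | succ d ih =>
    intro H _ _ hpH M _ _ _ _ ρ hd
    obtain ⟨v₀, hv₀⟩ := exists_ne (0 : M)
    by_cases hsc : ∀ h : H, ∃ c : ℂ, ρ h = c • (1 : M →ₗ[ℂ] M)
    · -- all scalar case
      have huniq : ∀ {c c' : ℂ}, c • (1 : M →ₗ[ℂ] M) = c' • (1 : M →ₗ[ℂ] M) → c = c' := by
        intro c c' h
        have := LinearMap.congr_fun h v₀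
        simp only [LinearMap.smul_apply, Module.End.one_apply] at this
        by_contra hne
        exact hv₀ (by
          have := sub_eq_zero.mpr this
          rw [← sub_smul] at this
          exact (smul_eq_zero.mp this).resolve_left (sub_ne_zero.mpr hne))
      classical
      let c : H → ℂ := fun h => (hsc h).choose
      have hcspec : ∀ h, ρ h = c h • (1 : M →ₗ[ℂ] M) := fun h => (hsc h).choose_spec
      have hc1 : c 1 = 1 := huniq (by rw [← hcspec, map_one, one_smul])
      have hcmul : ∀ g h, c (g * h) = c g * c h := by
        intro g h
        refine huniq ?_
        rw [← hcspec, map_mul, hcspec g, hcspec h]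
        ext w
        simp only [Module.End.mul_apply, LinearMap.smul_apply, Module.End.one_apply, mul_smul]
      have hcinv : ∀ g, c g * c g⁻¹ = 1 := fun g => by
        rw [← hcmul, mul_inv_cancel, hc1]
      let χ₀ : H →* ℂˣ :=
        { toFun := fun g => ⟨c g, c g⁻¹, hcinv g, by rw [mul_comm, hcinv]⟩
          map_one' := by ext; exact hc1
          map_mul' := fun g h => by ext; exact hcmul g h }
      refine ⟨⊤, χ₀.comp (Subgroup.subtype ⊤), fun x hx => ⟨1, one_pos, Subgroup.mem_top _, ?_⟩⟩
      intro hone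
      have : c (x ^ 1) = 1 := congrArg Units.val hone
      rw [pow_one] at this
      refine hx v₀ hv₀ ?_
      rw [hcspec x, this]
      simp
    · push_neg at hsc
      obtain ⟨t₀, ht₀⟩ := hsc
      classical
      haveI : Fact p.Prime := ⟨hp⟩
      -- the subgroup of scalar-acting elements
      let S : Subgroup H :=
        { carrier := {h | ∃ c : ℂ, ρ h = c • (1 : M →ₗ[ℂ] M)}
          one_mem' := ⟨1, by rw [map_one, one_smul]⟩
          mul_mem' := by
            rintro g h ⟨cg, hg⟩ ⟨ch, hh⟩
            refine ⟨cg * ch, ?_⟩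
            rw [map_mul, hg, hh]
            ext w
            simp only [Module.End.mul_apply, LinearMap.smul_apply, Module.End.one_apply, mul_smul]
          inv_mem' := by
            rintro h ⟨ch, hh⟩
            have hch : ch ≠ 0 := by
              intro h0
              subst h0
              have h1 : (1 : M →ₗ[ℂ] M) = ρ h⁻¹ * ρ h := by
                rw [← map_mul, inv_mul_cancel, map_one]
              rw [hh] at h1
              have := LinearMap.congr_fun h1 v₀
              simp at this
              exact hv₀ this
            refine ⟨ch⁻¹, ?_⟩
            ext w
            have key : ρ h (ch⁻¹ • w) = w := by
              rw [hh]
              simp only [LinearMap.smul_apply, Module.End.one_apply, smul_smul]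
              rw [mul_inv_cancel₀ hch, one_smul]
            calc ρ h⁻¹ w = ρ h⁻¹ (ρ h (ch⁻¹ • w)) := by rw [key]
              _ = (ρ h⁻¹ * ρ h) (ch⁻¹ • w) := rfl
              _ = ch⁻¹ • w := by rw [← map_mul, inv_mul_cancel, map_one, Module.End.one_apply]
              _ = (ch⁻¹ • (1 : M →ₗ[ℂ] M)) w := rfl }
      have hSmem : ∀ {h : H}, h ∈ S ↔ ∃ c : ℂ, ρ h = c • (1 : M →ₗ[ℂ] M) := Iff.rfl
      haveI hSnormal : S.Normal := by
        constructor
        rintro h ⟨ch, hh⟩ g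
        refine ⟨ch, ?_⟩
        rw [map_mul, map_mul, hh]
        ext w
        simp only [Module.End.mul_apply, LinearMap.smul_apply, Module.End.one_apply, map_smul]
        rw [← Module.End.mul_apply (ρ g) (ρ g⁻¹), ← map_mul, mul_inv_cancel, map_one,
          Module.End.one_apply]
      have ht₀S : t₀ ∉ S := fun hc => by obtain ⟨c, hc⟩ := hSmem.mp hc; exact ht₀ c hc
      haveI : Nontrivial (H ⧸ S) :=
        ⟨⟨QuotientGroup.mk t₀, 1, fun h => ht₀S ((QuotientGroup.eq_one_iff t₀).mp h)⟩⟩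
      haveI := (hpH.to_quotient S).center_nontrivial
      obtain ⟨zc, hzc1⟩ := exists_ne (1 : Subgroup.center (H ⧸ S))
      have hzcen : (zc : H ⧸ S) ∈ Subgroup.center (H ⧸ S) := zc.2
      have hz1 : (zc : H ⧸ S) ≠ 1 := fun h => hzc1 (Subtype.ext h)
      obtain ⟨t, ht⟩ := QuotientGroup.mk_surjective (zc : H ⧸ S)
      -- the normal subgroup A
      let A : Subgroup H := (Subgroup.zpowers (zc : H ⧸ S)).comap (QuotientGroup.mk' S)
      have hAmem : ∀ {a : H}, a ∈ A ↔ QuotientGroup.mk a ∈ Subgroup.zpowers (zc : H ⧸ S) :=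
        Iff.rfl
      have hAnormal : A.Normal := by
        constructor
        intro a ha g
        rw [hAmem] at ha ⊢
        have hc : (QuotientGroup.mk a : H ⧸ S) ∈ Subgroup.center (H ⧸ S) :=
          Subgroup.zpowers_le.mpr hzcen ha
        have : (QuotientGroup.mk (g * a * g⁻¹) : H ⧸ S) = QuotientGroup.mk a := by
          have h1 : (QuotientGroup.mk (g * a * g⁻¹) : H ⧸ S)
              = QuotientGroup.mk g * QuotientGroup.mk a * (QuotientGroup.mk g)⁻¹ := by
            simp [QuotientGroup.mk_mul, QuotientGroup.mk_inv]
          rw [h1, Subgroup.mem_center_iff.mp hc (QuotientGroup.mk g)]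
          group
        rw [this]
        exact ha
      -- every element of A is a scalar times a power of ρ t
      have hApow : ∀ a ∈ A, ∃ (k : ℕ) (cc : ℂ), ρ a = cc • ((ρ t) ^ k) := by
        intro a ha
        rw [hAmem] at ha
        have ha' : (QuotientGroup.mk a : H ⧸ S) ∈ Submonoid.powers (zc : H ⧸ S) :=
          mem_powers_iff_mem_zpowers.mpr ha
        obtain ⟨k, hk⟩ := ha'
        have hmk : (QuotientGroup.mk (t ^ k) : H ⧸ S) = QuotientGroup.mk a := by
          have hh : (QuotientGroup.mk (t ^ k) : H ⧸ S) = (QuotientGroup.mk t : H ⧸ S) ^ k :=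
            map_pow (QuotientGroup.mk' S) t k
          rw [hh, ht]
          exact hk
        have hms : (t ^ k)⁻¹ * a ∈ S := by
          rw [← QuotientGroup.eq]
          exact hmk
        obtain ⟨cs, hcs⟩ := hSmem.mp hms
        have : a = t ^ k * ((t ^ k)⁻¹ * a) := by group
        refine ⟨k, cs, ?_⟩
        rw [this, map_mul, hcs, map_pow]
        ext w
        simp only [Module.End.mul_apply, LinearMap.smul_apply, Module.End.one_apply, map_smul]
      have htA : t ∈ A := by
        rw [hAmem, ht]
        exact Subgroup.mem_zpowers _
      have htS : t ∉ S := fun hs => hz1 (by rw [← ht]; exact (QuotientGroup.eq_one_iff t).mpr hs)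
      -- common eigenvector
      obtain ⟨lam, hlam⟩ := Module.End.exists_eigenvalue (ρ t : Module.End ℂ M)
      obtain ⟨v, hv⟩ := hlam.exists_hasEigenvector
      have hvne : v ≠ 0 := hv.2
      have hTv : ρ t v = lam • v := hv.apply_eq_smul
      have hTkv : ∀ k : ℕ, ((ρ t) ^ k) v = lam ^ k • v := by
        intro k
        induction k with
        | zero => simp
        | succ k ihk =>
          rw [pow_succ', pow_succ']
          rw [Module.End.mul_apply, ihk, map_smul, hTv, smul_smul, mul_comm]
      have hμex : ∀ a ∈ A, ∃ dd : ℂ, ρ a v = dd • v := by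
        intro a ha
        obtain ⟨k, cc, hk⟩ := hApow a ha
        refine ⟨cc * lam ^ k, ?_⟩
        rw [hk]
        simp only [LinearMap.smul_apply]
        rw [hTkv, smul_smul]
      let μ : H → ℂ := fun a => if hh : ∃ dd : ℂ, ρ a v = dd • v then hh.choose else 0
      have hμspec : ∀ a ∈ A, ρ a v = μ a • v := by
        intro a ha
        have hex := hμex a ha
        simp only [μ, dif_pos hex]
        exact hex.choose_spec
      -- the common eigenspace N
      let N : Submodule ℂ M :=
        { carrier := {w | ∀ a ∈ A, ρ a w = μ a • w}
          add_mem' := by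
            intro w₁ w₂ h₁ h₂ a ha
            rw [map_add, h₁ a ha, h₂ a ha, smul_add]
          zero_mem' := by intro a ha; rw [map_zero, smul_zero]
          smul_mem' := by
            intro cc w hw a ha
            rw [map_smul, hw a ha, smul_comm] }
      have hNmem : ∀ {w : M}, w ∈ N ↔ ∀ a ∈ A, ρ a w = μ a • w := Iff.rfl
      have hvN : v ∈ N := hNmem.mpr hμspec
      have hNtop : N ≠ ⊤ := by
        intro htop
        refine htS (hSmem.mpr ⟨μ t, ?_⟩)
        ext w
        have hw : w ∈ N := htop ▸ Submodule.mem_top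
        rw [hNmem.mp hw t htA]
        rfl
      -- conjugation action on N
      have P1 : ∀ (g : H), ∀ u ∈ N, ∀ a ∈ A, ρ a (ρ g u) = μ (g⁻¹ * a * g) • (ρ g u) := by
        intro g u hu a ha
        have hmem : g⁻¹ * a * g ∈ A := by
          have := hAnormal.conj_mem a ha g⁻¹
          rwa [inv_inv] at this
        calc ρ a (ρ g u) = (ρ (a * g)) u := by rw [map_mul]; rfl
          _ = (ρ (g * (g⁻¹ * a * g))) u := by rw [show a * g = g * (g⁻¹ * a * g) by group]
          _ = ρ g (ρ (g⁻¹ * a * g) u) := by rw [map_mul]; rfl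
          _ = ρ g (μ (g⁻¹ * a * g) • u) := by rw [hNmem.mp hu _ hmem]
          _ = μ (g⁻¹ * a * g) • (ρ g u) := by rw [map_smul]
      have P2 : ∀ (g : H), (∀ a ∈ A, μ (g⁻¹ * a * g) = μ a) → Submodule.map (ρ g) N = N := by
        intro g hg
        apply le_antisymm
        · rintro w ⟨u, hu, rfl⟩
          rw [hNmem]
          intro a ha
          rw [P1 g u hu a ha, hg a ha]
        · intro w hw
          refine ⟨ρ g⁻¹ w, ?_, ?_⟩
          · show ∀ a ∈ A, ρ a (ρ g⁻¹ w) = μ a • (ρ g⁻¹ w)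
            intro a ha
            have hmem : g * a * g⁻¹ ∈ A := hAnormal.conj_mem a ha g
            have h1 := P1 g⁻¹ w hw a ha
            rw [inv_inv] at h1
            have h2 : μ (g⁻¹ * (g * a * g⁻¹) * g) = μ (g * a * g⁻¹) := hg _ hmem
            have h3 : g⁻¹ * (g * a * g⁻¹) * g = a := by group
            rw [h3] at h2
            rw [h1, h2]
          · calc ρ g (ρ g⁻¹ w) = (ρ g * ρ g⁻¹) w := rfl
              _ = w := by rw [← map_mul, mul_inv_cancel, map_one, Module.End.one_apply]
      -- stabilizer subgroup of N
      have hmapmul : ∀ (g h : H) (K : Submodule ℂ M),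
          Submodule.map (ρ (g * h)) K = Submodule.map (ρ g) (Submodule.map (ρ h) K) := by
        intro g h K
        rw [map_mul]
        exact Submodule.map_comp (ρ h) (ρ g) K
      have hmapone : Submodule.map (ρ 1) N = N := by
        rw [map_one]
        exact Submodule.map_id N
      let H₁ : Subgroup H :=
        { carrier := {h | Submodule.map (ρ h) N = N}
          one_mem' := hmapone
          mul_mem' := by
            intro g h hg hh
            show Submodule.map (ρ (g * h)) N = N
            rw [hmapmul]
            have hh' : Submodule.map (ρ h) N = N := hh
            have hg' : Submodule.map (ρ g) N = N := hg
            rw [hh', hg']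
          inv_mem' := by
            intro h hh
            have hh' : Submodule.map (ρ h) N = N := hh
            show Submodule.map (ρ h⁻¹) N = N
            calc Submodule.map (ρ h⁻¹) N
                = Submodule.map (ρ h⁻¹) (Submodule.map (ρ h) N) := by rw [hh']
              _ = Submodule.map (ρ (h⁻¹ * h)) N := (hmapmul _ _ _).symm
              _ = N := by rw [inv_mul_cancel]; exact hmapone }
      have hres : ∀ (h : ↥H₁) (w : M), w ∈ N → ρ (h : H) w ∈ N := by
        intro h w hw
        have h2 : Submodule.map (ρ (h : H)) N = N := h.2
        rw [← h2]
        exact Submodule.mem_map_of_mem hw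
      let ρ₁ : Representation ℂ ↥H₁ ↥N :=
        { toFun := fun h => (ρ (h : H)).restrict (fun w hw => hres h w hw)
          map_one' := by
            refine LinearMap.ext fun w => Subtype.ext ?_
            show ρ ((1 : ↥H₁) : H) (w : M) = (w : M)
            rw [OneMemClass.coe_one, map_one, Module.End.one_apply]
          map_mul' := by
            intro g h
            refine LinearMap.ext fun w => Subtype.ext ?_
            show ρ ((g * h : ↥H₁) : H) (w : M) = ρ (g : H) (ρ (h : H) (w : M))
            rw [Subgroup.coe_mul, map_mul]
            rfl }
      haveI hNnt : Nontrivial ↥N := Submodule.nontrivial_iff_ne_bot.mpr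
        (Submodule.ne_bot_iff N |>.mpr ⟨v, hvN, hvne⟩)
      have hrank : Module.finrank ℂ ↥N ≤ d := by
        have h1 : Module.finrank ℂ ↥N < Module.finrank ℂ M :=
          Submodule.finrank_lt hNtop
        exact Nat.le_of_lt_succ (lt_of_lt_of_le h1 hd)
      obtain ⟨C₁, χ₁, hC₁⟩ := ih ↥H₁ inferInstance inferInstance (hpH.to_subgroup H₁) ↥N
        inferInstance inferInstance inferInstance hNnt ρ₁ hrank
      let e := Subgroup.equivMapOfInjective C₁ H₁.subtype H₁.subtype_injective
      refine ⟨C₁.map H₁.subtype, χ₁.comp e.symm.toMonoidHom, ?_⟩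
      intro x hx
      have hex : ∃ n : ℕ, 0 < n ∧ Submodule.map (ρ (x ^ n)) N = N := by
        refine ⟨orderOf x, orderOf_pos x, ?_⟩
        rw [pow_orderOf_eq_one]
        exact hmapone
      set ℓ := Nat.find hex with hℓdef
      obtain ⟨hℓpos, hℓmap⟩ := Nat.find_spec hex
      have hxℓH₁ : x ^ ℓ ∈ H₁ := hℓmap
      set x' : ↥H₁ := ⟨x ^ ℓ, hxℓH₁⟩ with hx'def
      have hx'fix : ∀ w : ↥N, w ≠ 0 → ρ₁ x' w ≠ w := by
        intro w hw0 hfixw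
        have hwN : (w : M) ∈ N := w.2
        have hwne : (w : M) ≠ 0 := fun hq => hw0 (Subtype.ext hq)
        have hfixM : ρ (x ^ ℓ) (w : M) = (w : M) := congrArg Subtype.val hfixw
        set ws : ℕ → M := fun i => ρ (x ^ i) (w : M) with hwsdef
        have hws0 : ws 0 = (w : M) := by
          show ρ (x ^ 0) (w : M) = (w : M)
          rw [pow_zero, map_one, Module.End.one_apply]
        have hwsstep : ∀ i, ρ x (ws i) = ws (i + 1) := by
          intro i
          show ρ x (ρ (x ^ i) (w : M)) = ρ (x ^ (i + 1)) (w : M)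
          rw [← Module.End.mul_apply, ← map_mul, ← pow_succ']
        set vv := ∑ i ∈ Finset.range ℓ, ws i with hvvdef
        have hfixvv : ρ x vv = vv := by
          rw [hvvdef, map_sum]
          rw [Finset.sum_congr rfl (fun i _ => hwsstep i)]
          have h2 : ∑ i ∈ Finset.range ℓ, ws (i + 1) + ws 0
              = ∑ i ∈ Finset.range ℓ, ws i + ws ℓ := by
            rw [← Finset.sum_range_succ', Finset.sum_range_succ]
          have h3 : ws ℓ = ws 0 := by rw [hws0]; exact hfixM
          rw [h3] at h2
          exact add_right_cancel h2
        have hvv0 : vv = 0 := by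
          by_contra hne
          exact hx vv hne hfixvv
        have hsep : ∀ j, 0 < j → j < ℓ →
            ∃ a ∈ (A : Set H), μ ((x ^ 0)⁻¹ * a * x ^ 0) ≠ μ ((x ^ j)⁻¹ * a * x ^ j) := by
          intro j hj0 hjℓ
          by_contra hcon
          push_neg at hcon
          have hmapj : Submodule.map (ρ (x ^ j)) N = N := by
            apply P2
            intro a ha
            have hc2 := hcon a ha
            simp only [pow_zero, inv_one, one_mul, mul_one] at hc2
            exact hc2.symm
          exact Nat.find_min hex hjℓ ⟨hj0, hmapj⟩
        obtain ⟨ℓ', hℓ'⟩ : ∃ ℓ', ℓ = ℓ' + 1 := ⟨ℓ - 1, (Nat.succ_pred_eq_of_pos hℓpos).symm⟩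
        have hw0 := sep_lemma ρ (A : Set H) (fun i a => μ ((x ^ i)⁻¹ * a * x ^ i)) ℓ' ws
          (fun i _ a ha => P1 (x ^ i) (w : M) hwN a ha)
          (fun j hj hj' => hsep j hj (by rw [hℓ']; exact hj'))
          (by rw [← hℓ']; exact hvv0)
        rw [hws0] at hw0
        exact hwne hw0
      obtain ⟨m, hm0, hmem, hχ⟩ := hC₁ x' hx'fix
      have hcoe : ((x' ^ m : ↥H₁) : H) = x ^ (ℓ * m) := by
        rw [pow_mul]
        rfl
      have hmemC : x ^ (ℓ * m) ∈ C₁.map H₁.subtype :=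
        Subgroup.mem_map.mpr ⟨x' ^ m, hmem, hcoe⟩
      refine ⟨ℓ * m, Nat.mul_pos hℓpos hm0, hmemC, ?_⟩
      intro h1
      apply hχ
      have he : (⟨x ^ (ℓ * m), hmemC⟩ : ↥(C₁.map H₁.subtype)) = e ⟨x' ^ m, hmem⟩ := by
        refine Subtype.ext ?_
        rw [Subgroup.coe_equivMapOfInjective_apply]
        exact hcoe.symm
      rw [← MulEquiv.symm_apply_apply e ⟨x' ^ m, hmem⟩, ← he]
      exact h1



/-- If a finite `p`-group `H` has a nonzero finite-dimensional complex representation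
in which every element fixing a nonzero vector lies in the proper normal subgroup
`H*`, then there is a cyclic section `C/E` of `H` such that every element of
`H \ H*` has a power in `C \ E`. -/
theorem stmt_11 {p : ℕ} (hp : p.Prime) {H : Type*} [Group H] [Finite H]
    (hpH : IsPGroup p H) (Hstar : Subgroup H) [Hstar.Normal] (hlt : Hstar ≠ ⊤)
    (M : Type*) [AddCommGroup M] [Module ℂ M] [FiniteDimensional ℂ M] [Nontrivial M]
    (ρ : Representation ℂ H M)
    (hfix : ∀ h : H, (∃ v : M, v ≠ 0 ∧ ρ h v = v) → h ∈ Hstar) :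
    ∃ C : Subgroup H, ∃ E : Subgroup H, E ≤ C ∧
      ∃ hn : (E.subgroupOf C).Normal,
        (letI := hn; IsCyclic (C ⧸ E.subgroupOf C)) ∧
        ∀ x : H, x ∉ Hstar → ∃ n : ℕ, 0 < n ∧ x ^ n ∈ C ∧ x ^ n ∉ E := by
  classical
  obtain ⟨C, χ, hC⟩ := core_lemma hp (Module.finrank ℂ M) H inferInstance inferInstance hpH M
    inferInstance inferInstance inferInstance inferInstance ρ le_rfl
  refine ⟨C, (χ.ker).map C.subtype, Subgroup.map_subtype_le _, ?_⟩
  have h1 : ((χ.ker).map C.subtype).subgroupOf C = χ.ker :=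
    Subgroup.comap_map_eq_self_of_injective C.subtype_injective _
  rw [h1]
  refine ⟨inferInstance, ?_, ?_⟩
  · exact isCyclic_of_subgroup_isDomain ((Units.coeHom ℂ).comp (QuotientGroup.kerLift χ))
      (Units.val_injective.comp (QuotientGroup.kerLift_injective χ))
  · intro x hxstar
    have hnofix : ∀ v : M, v ≠ 0 → ρ x v ≠ v := fun v hv hfx => hxstar (hfix x ⟨v, hv, hfx⟩)
    obtain ⟨n, hn0, hxC, hχ⟩ := hC x hnofix
    refine ⟨n, hn0, hxC, ?_⟩
    intro hmem
    obtain ⟨y, hy, hyeq⟩ := Subgroup.mem_map.mp hmem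
    apply hχ
    have hyx : y = ⟨x ^ n, hxC⟩ := Subtype.ext hyeq
    rw [← hyx]
    exact hy
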